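/- Key splitting lemma: let Y be a Young diagram of size n and consider a 213-avoiding transversal T of Y whose 1 in the bottom row lies in bottom cell C = (n,i) with 1 < i < m (m the number of bottom cells). Then every 1 of T in a column strictly to the left of column i lies in a row strictly above every 1 of T in a column of the subdiagram A_C. -/

import Mathlib

/-- A Young diagram of size `n` (coordinates from the bottom-left, as in the paper):
`b i` is the length of the `i`-th row counted from the bottom, for `i < n`.
Rows get longer going up (top row is the largest), the staircase
`Y(n, n-1, ..., 1)` is contained (`i < b i`), and there are `n` columns (`b i ≤ n`). -/
def IsYoungShape (n : ℕ) (b : ℕ → ℕ) : Prop :=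
  (∀ i j : ℕ, i ≤ j → j < n → b i ≤ b j) ∧ ∀ i : ℕ, i < n → i < b i ∧ b i ≤ n

/-- A transversal of the shape `b`, encoded as a permutation sending each column `i`
(from the left) to the row `π i` (from the bottom) of the unique 1 in that column:
every cell `(column i, row π i)` must lie inside the diagram. -/
def IsTransversal (n : ℕ) (b : ℕ → ℕ) (π : Equiv.Perm (Fin n)) : Prop :=
  ∀ i : Fin n, (i : ℕ) < b (π i)

/-- The transversal `π` of the shape `b` contains the pattern `τ`: some `k` of its 1's
form a submatrix of the diagram (all crossing cells inside the diagram) identical to the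
permutation matrix of `τ`. -/
def ShapeContains (n : ℕ) (b : ℕ → ℕ) {k : ℕ} (π : Fin n → Fin n) (τ : Fin k → Fin k) : Prop :=
  ∃ f : Fin k ↪o Fin n,
    (∀ a c : Fin k, τ a < τ c ↔ π (f a) < π (f c)) ∧
    ∀ a c : Fin k, (f a : ℕ) < b (π (f c))

/-- The number of transversals of the shape `b` avoiding the pattern `τ`,
i.e. `|S_Y(τ)|`. -/
noncomputable def shapeAvoidCard (n : ℕ) (b : ℕ → ℕ) {k : ℕ} (τ : Fin k → Fin k) : ℕ :=
  Nat.card {π : Equiv.Perm (Fin n) // IsTransversal n b π ∧ ¬ ShapeContains n b ⇑π τ}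

/-- Shape-Wilf-equivalence: equally many avoiders on every Young diagram. -/
def ShapeWilfEquiv {k l : ℕ} (τ : Fin k → Fin k) (σ : Fin l → Fin l) : Prop :=
  ∀ (n : ℕ) (b : ℕ → ℕ), IsYoungShape n b → shapeAvoidCard n b τ = shapeAvoidCard n b σ

/-- The size `k` of the subdiagram `A_C` associated to the bottom cell `C` in column `c`
(0-indexed) of the Young diagram `b` of size `n`: the 45° ray drawn north-east from the
top-right corner of `C` in the reduction `Y/C` first meets the border of `Y/C` after
passing through `k` cells.  (`k = 0`, i.e. `A_C = ∅`, exactly when the first diagonal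
cell is already missing.) -/
noncomputable def rdK (n : ℕ) (b : ℕ → ℕ) (c : ℕ) : ℕ :=
  sInf {s : ℕ | (s = 0 ∧ (n ≤ 1 ∨ b 1 ≤ c + 1)) ∨ (1 ≤ s ∧ b s ≤ c + s + 1)}

/-- The row lengths (from the bottom) of the Young diagram `A_C` for the bottom cell in
column `c`: it occupies rows `1..k` of `Y` and the `k` columns `c+1, ..., c+k`. -/
noncomputable def rdA (n : ℕ) (b : ℕ → ℕ) (c : ℕ) (t : ℕ) : ℕ :=
  min (rdK n b c) (b (t + 1) - (c + 1))

/-- The row lengths (from the bottom) of the Young diagram `B_C` for the bottom cell in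
column `c`: what remains of `Y/C` after deleting the rows and columns of `A_C`;
it has size `n - 1 - k`. -/
noncomputable def rdB (n : ℕ) (b : ℕ → ℕ) (c : ℕ) (r : ℕ) : ℕ :=
  b (rdK n b c + 1 + r) - 1 - rdK n b c

/-- Any cell `(row s, column c+t)` with `1 ≤ t ≤ k`, `max 1 (t-1) ≤ s < n` lies in `Y`. -/
lemma rdK_cell (n : ℕ) (b : ℕ → ℕ) (hY : IsYoungShape n b) (c t s : ℕ)
    (ht1 : 1 ≤ t) (htk : t ≤ rdK n b c) (hs1 : 1 ≤ s) (hst : t - 1 ≤ s) (hsn : s < n) :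
    c + t < b s := by
  obtain ⟨hmono, _⟩ := hY
  set k := rdK n b c with hk
  have hnm : ∀ u, u < k → ¬ ((u = 0 ∧ (n ≤ 1 ∨ b 1 ≤ c + 1)) ∨ (1 ≤ u ∧ b u ≤ c + u + 1)) :=
    fun u hu => Nat.notMem_of_lt_sInf hu
  have hkpos : 0 < k := lt_of_lt_of_le ht1 htk
  have h0 := hnm 0 hkpos
  have hb1 : c + 1 < b 1 := by omega
  rcases Nat.lt_or_ge s k with hsk | hsk
  · have := hnm s hsk
    omega
  · rcases Nat.lt_or_ge k 2 with hk1 | hk2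
    · -- k = 1, t = 1
      have hb1s : b 1 ≤ b s := hmono 1 s hs1 hsn
      omega
    · have hkm := hnm (k - 1) (by omega)
      have hbs : b (k - 1) ≤ b s := hmono (k - 1) s (by omega) hsn
      omega

/-- Key splitting lemma: in a 213-avoiding transversal whose bottom-row 1 lies in the
bottom cell of column `c` with `0 < c < m - 1` (`m = b 0` bottom cells), every 1 in a
column strictly left of `c` lies in a row strictly above every 1 in a column of `A_C`
(the columns `c+1, ..., c + k`). -/
theorem splitting_lemma (n : ℕ) (b : ℕ → ℕ) (hn : 0 < n) (hY : IsYoungShape n b)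
    (π : Equiv.Perm (Fin n)) (hT : IsTransversal n b π)
    (hA : ¬ ShapeContains n b ⇑π (![1,0,2] : Fin 3 → Fin 3))
    (c : Fin n) (h1 : 0 < (c : ℕ)) (h2 : (c : ℕ) + 1 < b 0)
    (hbot : π c = ⟨0, hn⟩) :
    ∀ x y : Fin n, (x : ℕ) < (c : ℕ) → (c : ℕ) < (y : ℕ) →
      (y : ℕ) ≤ (c : ℕ) + rdK n b (c : ℕ) → π y < π x := by
  set k := rdK n b (c : ℕ) with hk
  suffices H : ∀ m : ℕ, ∀ y x : Fin n, (y : ℕ) ≤ m → (x : ℕ) < (c : ℕ) → (c : ℕ) < (y : ℕ) →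
      (y : ℕ) ≤ (c : ℕ) + k → π y < π x by
    intro x y hx hy hyk
    exact H (y : ℕ) y x le_rfl hx hy hyk
  intro m
  induction m with
  | zero => intro y x hym hx hcy hyk; omega
  | succ m ih =>
    intro y x hym hx hcy hyk
    rcases Nat.lt_or_ge (y : ℕ) (m + 1) with hlt | hge
    · exact ih y x (by omega) hx hcy hyk
    by_contra hcon
    -- π x ≠ π y since x ≠ y
    have hxy : π x < π y := by
      rcases lt_trichotomy (π x) (π y) with h' | h' | h'
      · exact h'
      · have := π.injective h'
        have : (x : ℕ) = (y : ℕ) := by rw [this]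
        omega
      · exact absurd h' hcon
    set t : ℕ := (y : ℕ) - (c : ℕ) with ht
    have ht1 : 1 ≤ t := by omega
    have htk : t ≤ k := by omega
    have hyn : (y : ℕ) < n := y.isLt
    -- π w ≠ 0 for w ≠ c
    have hne0 : ∀ w : Fin n, w ≠ c → 1 ≤ (π w : ℕ) := by
      intro w hw
      by_contra hc0
      have : π w = ⟨0, hn⟩ := by
        apply Fin.ext; simp; omega
      exact hw (π.injective (this.trans hbot.symm))
    -- find the middle column z
    obtain ⟨z, hcz, hzy, hπzx, hπzt⟩ :
        ∃ z : Fin n, (c : ℕ) ≤ (z : ℕ) ∧ (z : ℕ) < (y : ℕ) ∧ (π z : ℕ) < (π x : ℕ) ∧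
          t - 1 ≤ (π z : ℕ) := by
      rcases Nat.lt_or_ge t 2 with ht2 | ht2
      · -- t = 1 : take z = c
        refine ⟨c, le_rfl, by omega, ?_, by omega⟩
        have := hne0 x (by intro h; rw [h] at hx; omega)
        rw [hbot]; simp; omega
      · -- t ≥ 2 : take the column in (c, y) with highest 1
        have hw : (⟨(c : ℕ) + 1, by omega⟩ : Fin n) ∈ Finset.Ioo c y := by
          rw [Finset.mem_Ioo]
          constructor <;> rw [Fin.lt_def] <;> simp <;> omega
        obtain ⟨z, hzF, hzmax⟩ := Finset.exists_max_image (Finset.Ioo c y) (fun w => π w) ⟨_, hw⟩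
        rw [Finset.mem_Ioo, Fin.lt_def, Fin.lt_def] at hzF
        obtain ⟨hcz, hzy⟩ := hzF
        have hzc' : z ≠ c := by intro h; rw [h] at hcz; omega
        -- card argument: π z ≥ t - 1
        have hcard : (Finset.Ioo c y).card = (y : ℕ) - (c : ℕ) - 1 := Fin.card_Ioo c y
        have hsub : (Finset.Ioo c y).image (fun w => (π w : ℕ)) ⊆ Finset.Icc 1 (π z : ℕ) := by
          intro v hv
          rw [Finset.mem_image] at hv
          obtain ⟨w, hwF, rfl⟩ := hv
          rw [Finset.mem_Icc]
          refine ⟨?_, ?_⟩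
          · apply hne0
            intro h
            rw [Finset.mem_Ioo, h] at hwF
            exact lt_irrefl _ hwF.1
          · have := hzmax w hwF
            exact this
        have hinj : Set.InjOn (fun w => (π w : ℕ)) (Finset.Ioo c y : Set (Fin n)) := by
          intro a _ b _ hab
          exact π.injective (Fin.val_injective hab)
        have hle : t - 1 ≤ (π z : ℕ) := by
          have h1' := Finset.card_le_card hsub
          rw [Finset.card_image_of_injOn hinj, hcard, Nat.card_Icc] at h1'
          omega
        have hzyk : (z : ℕ) ≤ (c : ℕ) + k := by omega
        have hπzx := ih z x (by omega) hx hcz hzyk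
        rw [Fin.lt_def] at hπzx
        exact ⟨z, le_of_lt hcz, hzy, hπzx, hle⟩
    -- the three cells in column y are inside the diagram
    have hyct : (y : ℕ) = (c : ℕ) + t := by omega
    have hπz1 : 1 ≤ (π z : ℕ) ∨ t = 1 := by
      rcases Nat.lt_or_ge t 2 with h | h
      · right; omega
      · left; omega
    have hbz : (y : ℕ) < b (π z) := by
      rcases hπz1 with h | h
      · rw [hyct]
        exact rdK_cell n b hY (c : ℕ) t (π z : ℕ) ht1 htk h hπzt (π z).isLt
      · -- t = 1 ⇒ π z might be 0; then z's row is row π z and b (π z) ≥ b 0 > c + 1 = y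
        have hb0 : b 0 ≤ b (π z) := hY.1 0 (π z : ℕ) (Nat.zero_le _) (π z).isLt
        omega
    have hπxt : t ≤ (π x : ℕ) := by omega
    have hbx : (y : ℕ) < b (π x) := by
      rw [hyct]
      exact rdK_cell n b hY (c : ℕ) t (π x : ℕ) ht1 htk (by omega) (by omega) (π x).isLt
    have hby : (y : ℕ) < b (π y) := hT y
    -- build the 213 pattern on columns x < z < y
    have hxz : x < z := by rw [Fin.lt_def]; omega
    have hzy' : z < y := by rw [Fin.lt_def]; omega
    rw [Fin.lt_def] at hxy
    have hcon' : ¬ ((π y : ℕ) < (π x : ℕ)) := by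
      rw [Fin.lt_def] at hcon; exact hcon
    have hmono3 : StrictMono (![x, z, y] : Fin 3 → Fin n) := by
      rw [Fin.strictMono_iff_lt_succ]
      intro i
      fin_cases i <;> rw [Fin.lt_def] <;>
        simp only [Fin.succ, Fin.castSucc, Fin.castAdd, Fin.castLE, Matrix.cons_val_zero,
          Matrix.cons_val_one, Matrix.head_cons, Matrix.cons_val_two, Matrix.tail_cons] <;>
        simp <;> omega
    apply hA
    refine ⟨OrderEmbedding.ofStrictMono _ hmono3, ?_, ?_⟩
    · intro a c'
      fin_cases a <;> fin_cases c' <;>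
        simp only [OrderEmbedding.coe_ofStrictMono, Fin.lt_def] <;> simp <;> omega
    · intro a c'
      fin_cases a <;> fin_cases c' <;>
        simp only [OrderEmbedding.coe_ofStrictMono] <;> simp <;> omega
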